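/- (Direct-cause processes bound the common-cause indicator.) Let d ≥ 2. If a process comb is purely direct-cause, i.e. J = ρ_A ⊗ J_N where ρ_A is positive semidefinite with Tr ρ_A = 1 and J_N is a positive semidefinite matrix on ℂ^d ⊗ ℂ^d (factors B and C) with Tr_C J_N = I_B (the Choi matrix of a channel from B to C), then for every choice of unitaries U₁, U₂ and every maximally entangled orthonormal basis {|Φ_i⟩}, the common-cause indicator distribution of J satisfies p_i ≤ 1/d for all i; consequently H(p) ≥ log₂ d. -/

import Mathlib

open Matrix BigOperators ComplexOrder

noncomputable section

/-- Index type for the three systems A, B, C. -/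
abbrev PIdx (dA dB dC : ℕ) := Fin dA × Fin dB × Fin dC

/-- Matrices on `ℂ^{dA} ⊗ ℂ^{dB} ⊗ ℂ^{dC}`. -/
abbrev PMat (dA dB dC : ℕ) := Matrix (PIdx dA dB dC) (PIdx dA dB dC) ℂ

/-- Partial trace over the third (C) tensor factor. -/
def trC {dA dB dC : ℕ} (M : PMat dA dB dC) :
    Matrix (Fin dA × Fin dB) (Fin dA × Fin dB) ℂ :=
  Matrix.of fun i j => ∑ c : Fin dC, M (i.1, i.2, c) (j.1, j.2, c)

/-- Partial trace over the second tensor factor of a bipartite matrix. -/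
def trSnd {d₁ d₂ : ℕ} (M : Matrix (Fin d₁ × Fin d₂) (Fin d₁ × Fin d₂) ℂ) :
    Matrix (Fin d₁) (Fin d₁) ℂ :=
  Matrix.of fun a a' => ∑ b : Fin d₂, M (a, b) (a', b)

/-- A process comb: a PSD matrix `J` on A ⊗ B ⊗ C with `Tr_C J = ρ_A ⊗ I_B`
for some state `ρ_A`. -/
def IsProcessComb {dA dB dC : ℕ} (J : PMat dA dB dC) : Prop :=
  J.PosSemidef ∧ ∃ ρ : Matrix (Fin dA) (Fin dA) ℂ,
    ρ.PosSemidef ∧ ρ.trace = 1 ∧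
    trC J = Matrix.of fun i j => ρ i.1 j.1 * (if i.2 = j.2 then (1 : ℂ) else 0)

/-- A tester with `m` outcomes: PSD matrices `T x` with `∑ x, T x = Λ ⊗ I_C`
for some PSD `Λ` on A ⊗ B with `Tr_B Λ = I_A`. -/
def IsTester {dA dB dC m : ℕ} (T : Fin m → PMat dA dB dC) : Prop :=
  (∀ x, (T x).PosSemidef) ∧
  ∃ Λ : Matrix (Fin dA × Fin dB) (Fin dA × Fin dB) ℂ,
    Λ.PosSemidef ∧ trSnd Λ = 1 ∧
    (∑ x, T x) = Matrix.of fun i j =>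
      Λ (i.1, i.2.1) (j.1, j.2.1) * (if i.2.2 = j.2.2 then (1 : ℂ) else 0)

/-- Outcome probability `Tr[J T]` (as a real number). -/
def prob {dA dB dC : ℕ} (J T : PMat dA dB dC) : ℝ := ((J * T).trace).re

/-- `P_k`: Bob's optimal winning probability in the quantum roulette with `k` chips,
for the pair of testers `T`, `S`. -/
def rouletteP {dA dB dC m : ℕ} (T S : Fin m → PMat dA dB dC) (k : ℕ) : ℝ :=
  sSup { r : ℝ | ∃ J : PMat dA dB dC, IsProcessComb J ∧
    ∃ G : Finset (Fin 2 × Fin m), G.card = k ∧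
      r = ∑ g ∈ G, (1 / 2 : ℝ) * prob J (if g.1 = 0 then T g.2 else S g.2) }

/-- The roulette vector `w ∈ ℝ^{2m}`, `w_k = P_k - P_{k-1}`. -/
def rouletteW {dA dB dC m : ℕ} (T S : Fin m → PMat dA dB dC) : Fin (m + m) → ℝ :=
  fun k => rouletteP T S (k.1 + 1) - rouletteP T S k.1

/-- Sum of the `k` largest entries of a (nonnegative) vector, padding with zeros. -/
def kMaxSum {n : ℕ} (u : Fin n → ℝ) (k : ℕ) : ℝ :=
  sSup { r : ℝ | ∃ A : Finset (Fin n), A.card = min k n ∧ r = ∑ i ∈ A, u i }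

/-- `MajorizedBy u v` means `u ≺ v`: every partial sum of the `k` largest entries of `u`
is at most that of `v`, and the total sums agree. -/
def MajorizedBy {m n : ℕ} (u : Fin m → ℝ) (v : Fin n → ℝ) : Prop :=
  (∀ k : ℕ, kMaxSum u k ≤ kMaxSum v k) ∧ ∑ i, u i = ∑ i, v i

/-- Base-2 Shannon entropy of a finite vector. -/
def H2 {n : ℕ} (p : Fin n → ℝ) : ℝ := -∑ i, p i * Real.logb 2 (p i)

/-- Rank-one projector `|φ⟩⟨φ|` on a bipartite system. -/
def projMat {d : ℕ} (φ : Fin d × Fin d → ℂ) :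
    Matrix (Fin d × Fin d) (Fin d × Fin d) ℂ :=
  Matrix.of fun x y => φ x * (starRingEnd ℂ) (φ y)

/-- Embed an operator on A ⊗ C as an operator on A ⊗ B ⊗ C acting as the identity on B. -/
def embAC {d : ℕ} (M : Matrix (Fin d × Fin d) (Fin d × Fin d) ℂ) : PMat d d d :=
  Matrix.of fun i j => M (i.1, i.2.2) (j.1, j.2.2) * (if i.2.1 = j.2.1 then (1 : ℂ) else 0)

/-- Embed an operator on B ⊗ C as an operator on A ⊗ B ⊗ C acting as the identity on A. -/
def embBC {d : ℕ} (M : Matrix (Fin d × Fin d) (Fin d × Fin d) ℂ) : PMat d d d :=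
  Matrix.of fun i j => M (i.2.1, i.2.2) (j.2.1, j.2.2) * (if i.1 = j.1 then (1 : ℂ) else 0)

/-- `(U ⊗ V) |φ⟩` for a bipartite vector `φ`. -/
def kronVec {d : ℕ} (U V : Matrix (Fin d) (Fin d) ℂ) (φ : Fin d × Fin d → ℂ) :
    Fin d × Fin d → ℂ :=
  fun x => ∑ y : Fin d × Fin d, U x.1 y.1 * V x.2 y.2 * φ y

/-- An orthonormal basis `{Φ_i}` of `ℂ^d ⊗ ℂ^d` consisting of maximally entangled vectors,
with `Φ_1 = (1/√d) ∑_k |kk⟩`. -/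
def IsMaxEntBasis {d : ℕ} (Φ : Fin (d * d) → Fin d × Fin d → ℂ) : Prop :=
  (∀ i j, ∑ x : Fin d × Fin d, (starRingEnd ℂ) (Φ i x) * Φ j x
      = if i = j then (1 : ℂ) else 0) ∧
  (∀ i a a', ∑ b : Fin d, Φ i (a, b) * (starRingEnd ℂ) (Φ i (a', b))
      = if a = a' then (1 : ℂ) / d else 0) ∧
  (∀ i b b', ∑ a : Fin d, Φ i (a, b) * (starRingEnd ℂ) (Φ i (a, b'))
      = if b = b' then (1 : ℂ) / d else 0) ∧
  ∀ (h : 0 < d * d) (x : Fin d × Fin d),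
    Φ ⟨0, h⟩ x = if x.1 = x.2 then ((1 / Real.sqrt d : ℝ) : ℂ) else 0

/-- Outcome distribution of the common-cause indicator `T_CC(U₁, U₂)` on a process comb:
`p_i = (1/d) Tr[J ((U₁⊗U₂)|Φ_i⟩⟨Φ_i|(U₁⊗U₂)†)_{AC} ⊗ I_B]`. -/
def ccProb {d : ℕ} (U₁ U₂ : Matrix (Fin d) (Fin d) ℂ)
    (Φ : Fin (d * d) → Fin d × Fin d → ℂ) (J : PMat d d d) : Fin (d * d) → ℝ :=
  fun i => (1 / d) * prob J (embAC (projMat (kronVec U₁ U₂ (Φ i))))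

/-- Outcome distribution of the direct-cause indicator `T_DC(U₃, U₄)` on a process comb:
`q_i = (1/d) Tr[J (I_A ⊗ ((U₃⊗U₄)|Φ_i⟩⟨Φ_i|(U₃⊗U₄)†)_{BC})]`. -/
def dcProb {d : ℕ} (U₃ U₄ : Matrix (Fin d) (Fin d) ℂ)
    (Φ : Fin (d * d) → Fin d × Fin d → ℂ) (J : PMat d d d) : Fin (d * d) → ℝ :=
  fun i => (1 / d) * prob J (embBC (projMat (kronVec U₃ U₄ (Φ i))))


namespace CCAux

open Kronecker

lemma kron_conjTranspose {m n : Type*} [Fintype m] [Fintype n]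
    (A : Matrix m m ℂ) (B : Matrix n n ℂ) : (A ⊗ₖ B)ᴴ = Aᴴ ⊗ₖ Bᴴ := by
  ext ⟨i, j⟩ ⟨k, l⟩
  simp [Matrix.conjTranspose_apply, Matrix.kroneckerMap_apply]

lemma aux_trace_sq {n m : Type*} [Fintype n] [Fintype m] [DecidableEq n] (C : Matrix m n ℂ) :
    ((Cᴴ * C).trace).re = ∑ i : n, ∑ j : m, Complex.normSq (C j i) := by
  simp [Matrix.trace, Matrix.mul_apply, Matrix.conjTranspose_apply, Matrix.diag,
    Complex.normSq_apply]

lemma aux_trace_mul {n : Type*} [Fintype n] [DecidableEq n] {P Q : Matrix n n ℂ}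
    (hP : P.PosSemidef) (hQ : Q.PosSemidef) :
    0 ≤ ((P * Q).trace).re ∧ ((P * Q).trace).re ≤ (P.trace).re * (Q.trace).re := by
  open scoped MatrixOrder Matrix.Norms.L2Operator in
  obtain ⟨A, rfl⟩ := CStarAlgebra.nonneg_iff_eq_star_mul_self.mp hP.nonneg
  open scoped MatrixOrder Matrix.Norms.L2Operator in
  obtain ⟨B, rfl⟩ := CStarAlgebra.nonneg_iff_eq_star_mul_self.mp hQ.nonneg
  simp only [Matrix.star_eq_conjTranspose]
  have key : (Aᴴ * A * (Bᴴ * B)).trace = ((A * Bᴴ)ᴴ * (A * Bᴴ)).trace := by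
    rw [Matrix.conjTranspose_mul, Matrix.conjTranspose_conjTranspose,
      show Aᴴ * A * (Bᴴ * B) = (Aᴴ * (A * Bᴴ)) * B by
        simp only [Matrix.mul_assoc],
      Matrix.trace_mul_comm]
    simp only [Matrix.mul_assoc]
  rw [key, aux_trace_sq, aux_trace_sq, aux_trace_sq]
  constructor
  · exact Finset.sum_nonneg fun i _ => Finset.sum_nonneg fun j _ => Complex.normSq_nonneg _
  · calc ∑ i : n, ∑ j : n, Complex.normSq ((A * Bᴴ) j i)
        ≤ ∑ i : n, ∑ j : n, (∑ k, Complex.normSq (A j k)) * (∑ k, Complex.normSq (B i k)) := by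
          apply Finset.sum_le_sum; intro i _; apply Finset.sum_le_sum; intro j _
          have h1 : ‖(A * Bᴴ) j i‖
              ≤ ∑ k, ‖A j k‖ * ‖B i k‖ := by
            rw [Matrix.mul_apply]
            refine (norm_sum_le _ _).trans ?_
            apply Finset.sum_le_sum; intro k _
            simp [Matrix.conjTranspose_apply, norm_mul]
          have h2 : Complex.normSq ((A * Bᴴ) j i)
              ≤ (∑ k, ‖A j k‖ * ‖B i k‖) ^ 2 := by
            rw [Complex.normSq_eq_norm_sq]
            exact pow_le_pow_left₀ (norm_nonneg _) h1 2
          refine h2.trans ?_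
          refine (Finset.sum_mul_sq_le_sq_mul_sq _ _ _).trans ?_
          apply le_of_eq
          congr 1 <;> (apply Finset.sum_congr rfl; intro k _; rw [Complex.sq_norm])
    _ = (∑ i : n, ∑ j : n, Complex.normSq (A j i)) * (∑ i : n, ∑ j : n, Complex.normSq (B j i)) := by
          rw [Finset.sum_comm, ← Finset.sum_mul_sum]
          exact congrArg₂ _ Finset.sum_comm Finset.sum_comm

lemma sum_in5 {ι : Type*} [Fintype ι] {d : ℕ} (f : ι → Fin d → Fin d → Fin d → Fin d → Fin d → ℂ) :
    ∑ i, ∑ a, ∑ b, ∑ c, ∑ a', ∑ c', f i a b c a' c'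
      = ∑ a, ∑ b, ∑ c, ∑ a', ∑ c', ∑ i, f i a b c a' c' := by
  rw [Finset.sum_comm]
  refine Finset.sum_congr rfl fun a _ => ?_
  rw [Finset.sum_comm]
  refine Finset.sum_congr rfl fun b _ => ?_
  rw [Finset.sum_comm]
  refine Finset.sum_congr rfl fun c _ => ?_
  rw [Finset.sum_comm]
  refine Finset.sum_congr rfl fun a' _ => ?_
  rw [Finset.sum_comm]

lemma sum_rot3 {d : ℕ} (f : Fin d → Fin d → Fin d → ℂ) :
    ∑ c, ∑ c', ∑ b, f c c' b = ∑ b, ∑ c, ∑ c', f c c' b := by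
  rw [show (∑ c, ∑ c', ∑ b, f c c' b) = ∑ c, ∑ b, ∑ c', f c c' b from
    Finset.sum_congr rfl fun c _ => Finset.sum_comm, Finset.sum_comm]

lemma perm4 {d : ℕ} (f : Fin d → Fin d → Fin d → Fin d → ℂ) :
    (∑ a', ∑ c, ∑ c', ∑ b, f a' c c' b) = ∑ b, ∑ c, ∑ a', ∑ c', f a' c c' b :=
  calc (∑ a', ∑ c, ∑ c', ∑ b, f a' c c' b)
      = ∑ a', ∑ c, ∑ b, ∑ c', f a' c c' b :=
        Finset.sum_congr rfl fun _ _ => Finset.sum_congr rfl fun _ _ => Finset.sum_comm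
    _ = ∑ a', ∑ b, ∑ c, ∑ c', f a' c c' b :=
        Finset.sum_congr rfl fun _ _ => Finset.sum_comm
    _ = ∑ b, ∑ a', ∑ c, ∑ c', f a' c c' b := Finset.sum_comm
    _ = ∑ b, ∑ c, ∑ a', ∑ c', f a' c c' b :=
        Finset.sum_congr rfl fun _ _ => Finset.sum_comm

lemma kronVec_eq {d : ℕ} (U V : Matrix (Fin d) (Fin d) ℂ) (φ : Fin d × Fin d → ℂ) :
    kronVec U V φ = (U ⊗ₖ V) *ᵥ φ := by
  funext x
  simp [kronVec, Matrix.mulVec, dotProduct, Matrix.kroneckerMap_apply]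

lemma psi_inner {d : ℕ} {U₁ U₂ : Matrix (Fin d) (Fin d) ℂ}
    (h₁ : U₁ᴴ * U₁ = 1) (h₂ : U₂ᴴ * U₂ = 1) (φ χ : Fin d × Fin d → ℂ) :
    ∑ x, (starRingEnd ℂ) (kronVec U₁ U₂ φ x) * kronVec U₁ U₂ χ x
      = ∑ y, (starRingEnd ℂ) (φ y) * χ y := by
  have hW : (U₁ ⊗ₖ U₂)ᴴ * (U₁ ⊗ₖ U₂) = 1 := by
    rw [kron_conjTranspose, ← Matrix.mul_kronecker_mul, h₁, h₂, Matrix.one_kronecker_one]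
  have h0 : ∑ x, (starRingEnd ℂ) (kronVec U₁ U₂ φ x) * kronVec U₁ U₂ χ x
      = dotProduct (star (kronVec U₁ U₂ φ)) (kronVec U₁ U₂ χ) := by
    simp [dotProduct, Pi.star_apply]
  rw [h0, kronVec_eq, kronVec_eq, Matrix.star_mulVec, ← Matrix.dotProduct_mulVec,
    Matrix.mulVec_mulVec, hW, Matrix.one_mulVec]
  simp [dotProduct, Pi.star_apply]

/-- the matrix of a bipartite vector -/
def Rmat {d : ℕ} (φ : Fin d × Fin d → ℂ) : Matrix (Fin d) (Fin d) ℂ :=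
  Matrix.of fun a c => φ (a, c)

lemma Rmat_kron {d : ℕ} (U₁ U₂ : Matrix (Fin d) (Fin d) ℂ) (φ : Fin d × Fin d → ℂ) :
    Rmat (kronVec U₁ U₂ φ) = U₁ * Rmat φ * U₂ᵀ := by
  ext a c
  simp only [Rmat, Matrix.of_apply, kronVec, Matrix.mul_apply, Matrix.transpose_apply,
    Fintype.sum_prod_type, Finset.sum_mul, Finset.mul_sum]
  rw [Finset.sum_comm]
  refine Finset.sum_congr rfl fun y1 _ => Finset.sum_congr rfl fun y2 _ => by ring

lemma marg_kron {d : ℕ} {U₁ U₂ : Matrix (Fin d) (Fin d) ℂ}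
    (h₁ : U₁ᴴ * U₁ = 1) (h₂ : U₂ * U₂ᴴ = 1) (φ : Fin d × Fin d → ℂ) (z : ℂ)
    (hφ : (Rmat φ)ᴴ * Rmat φ = z • 1) :
    (Rmat (kronVec U₁ U₂ φ))ᴴ * Rmat (kronVec U₁ U₂ φ) = z • 1 := by
  have ht : (U₂ᵀ)ᴴ * U₂ᵀ = 1 := by
    ext a b
    have h2ab := congrArg (fun M => M b a) h₂
    simp only [Matrix.mul_apply, Matrix.conjTranspose_apply, Matrix.transpose_apply,
      Matrix.one_apply] at h2ab ⊢
    rw [show (∑ k, star (U₂ a k) * U₂ b k)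
        = ∑ k, U₂ b k * star (U₂ a k) from
      Finset.sum_congr rfl fun k _ => mul_comm _ _, h2ab]
    simp only [eq_comm]
  rw [Rmat_kron, Matrix.conjTranspose_mul, Matrix.conjTranspose_mul]
  simp only [Matrix.mul_assoc]
  rw [show U₁ᴴ * (U₁ * (Rmat φ * U₂ᵀ)) = Rmat φ * U₂ᵀ by
    rw [← Matrix.mul_assoc, h₁, Matrix.one_mul]]
  rw [show (Rmat φ)ᴴ * (Rmat φ * U₂ᵀ) = (z • 1) * U₂ᵀ by
    rw [← Matrix.mul_assoc, hφ]]
  rw [Matrix.smul_mul, Matrix.one_mul, Matrix.mul_smul, ht]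

lemma complete {d : ℕ} (ψ : Fin (d * d) → Fin d × Fin d → ℂ)
    (h : ∀ i j, ∑ x, (starRingEnd ℂ) (ψ i x) * ψ j x = if i = j then (1 : ℂ) else 0) :
    ∀ x y, ∑ i, ψ i x * (starRingEnd ℂ) (ψ i y) = if x = y then (1 : ℂ) else 0 := by
  intro x y
  let e : Fin d × Fin d ≃ Fin (d * d) := finProdFinEquiv
  let G : Matrix (Fin (d * d)) (Fin (d * d)) ℂ := Matrix.of fun i j => ψ i (e.symm j)
  have hGG : G * Gᴴ = 1 := by
    ext i j
    simp only [G, Matrix.mul_apply, Matrix.conjTranspose_apply, Matrix.of_apply,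
      Matrix.one_apply, Complex.star_def]
    calc ∑ k, ψ i (e.symm k) * (starRingEnd ℂ) (ψ j (e.symm k))
        = ∑ x : Fin d × Fin d, ψ i x * (starRingEnd ℂ) (ψ j x) :=
          Fintype.sum_equiv e.symm _ _ (fun k => rfl)
      _ = (starRingEnd ℂ) (∑ x : Fin d × Fin d, (starRingEnd ℂ) (ψ i x) * ψ j x) := by
          rw [map_sum]
          exact Finset.sum_congr rfl fun x _ => by
            simp only [_root_.map_mul, Complex.conj_conj]
      _ = if i = j then 1 else 0 := by
          rw [h i j, apply_ite (starRingEnd ℂ), _root_.map_one, _root_.map_zero]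
  have hGG' : Gᴴ * G = 1 := mul_eq_one_comm.mp hGG
  have this2 := congrArg (fun M => M (e y) (e x)) hGG'
  simp only [Matrix.mul_apply, Matrix.conjTranspose_apply, Matrix.of_apply,
    Matrix.one_apply, Equiv.symm_apply_apply, G, Complex.star_def] at this2
  rw [show (∑ i, ψ i x * (starRingEnd ℂ) (ψ i y))
      = ∑ i, (starRingEnd ℂ) (ψ i y) * ψ i x from
    Finset.sum_congr rfl fun i _ => mul_comm _ _]
  rw [this2]
  simp only [Equiv.apply_eq_iff_eq]
  simp only [eq_comm]

lemma psdM {d : ℕ} (JN : Matrix (Fin d × Fin d) (Fin d × Fin d) ℂ) (hJN : JN.PosSemidef) :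
    (Matrix.of fun c c' => ∑ b, JN (b, c) (b, c') : Matrix (Fin d) (Fin d) ℂ).PosSemidef := by
  refine Matrix.PosSemidef.of_dotProduct_mulVec_nonneg ?_ ?_
  · ext c c'
    simp only [Matrix.conjTranspose_apply, Matrix.of_apply, star_sum]
    exact Finset.sum_congr rfl fun b _ => hJN.1.apply _ _
  · intro v
    have key : ∀ b : Fin d,
        (star (fun (x : Fin d × Fin d) => if x.1 = b then v x.2 else 0)) ⬝ᵥ
            (JN *ᵥ (fun x => if x.1 = b then v x.2 else 0))
          = ∑ c, ∑ c', star (v c) * JN (b, c) (b, c') * v c' := by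
      intro b
      simp only [dotProduct, Matrix.mulVec, Pi.star_apply, Fintype.sum_prod_type,
        apply_ite (star : ℂ → ℂ), star_zero, ite_mul, zero_mul, mul_ite, mul_zero,
        Finset.sum_ite_irrel, Finset.sum_const_zero, Finset.sum_ite_eq',
        Finset.mem_univ, if_true, Finset.mul_sum]
      exact Finset.sum_congr rfl fun c _ => Finset.sum_congr rfl fun c' _ => by ring
    have key2 : (star v) ⬝ᵥ ((Matrix.of fun c c' => ∑ b, JN (b, c) (b, c')) *ᵥ v)
        = ∑ b, ∑ c, ∑ c', star (v c) * JN (b, c) (b, c') * v c' := by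
      simp only [dotProduct, Matrix.mulVec, Matrix.of_apply, Pi.star_apply,
        Finset.mul_sum, Finset.sum_mul]
      rw [sum_rot3]
      exact Finset.sum_congr rfl fun b _ => Finset.sum_congr rfl fun c _ =>
        Finset.sum_congr rfl fun c' _ => by ring
    rw [key2]
    exact Finset.sum_nonneg fun b _ => (key b) ▸ hJN.dotProduct_mulVec_nonneg _

lemma trace_emb {d : ℕ} (ρ : Matrix (Fin d) (Fin d) ℂ)
    (JN : Matrix (Fin d × Fin d) (Fin d × Fin d) ℂ)
    (P : Matrix (Fin d × Fin d) (Fin d × Fin d) ℂ) :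
    ((Matrix.of fun (p q : PIdx d d d) => ρ p.1 q.1 * JN (p.2.1, p.2.2) (q.2.1, q.2.2)) *
        embAC P).trace
      = ∑ a : Fin d, ∑ b : Fin d, ∑ c : Fin d, ∑ a' : Fin d, ∑ c' : Fin d,
          ρ a a' * JN (b, c) (b, c') * P (a', c') (a, c) := by
  simp only [Matrix.trace, Matrix.diag, Matrix.mul_apply, embAC, Matrix.of_apply]
  simp only [Fintype.sum_prod_type, mul_ite, mul_one, mul_zero, Finset.sum_ite_irrel,
    Finset.sum_const_zero, Finset.sum_ite_eq', Finset.mem_univ, if_true]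

lemma trace_rhs {d : ℕ} (ρ : Matrix (Fin d) (Fin d) ℂ)
    (JN : Matrix (Fin d × Fin d) (Fin d × Fin d) ℂ) (ψ : Fin d × Fin d → ℂ) :
    (ρ * (Rmat ψ * (Matrix.of fun c c' => ∑ b, JN (b, c) (b, c'))ᵀ * (Rmat ψ)ᴴ)).trace
      = ∑ a, ∑ b, ∑ c, ∑ a', ∑ c',
          ρ a a' * JN (b, c) (b, c') * (ψ (a', c') * (starRingEnd ℂ) (ψ (a, c))) := by
  simp only [Matrix.trace, Matrix.diag, Matrix.mul_apply, Matrix.of_apply,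
    Matrix.transpose_apply, Matrix.conjTranspose_apply, Rmat, Finset.mul_sum,
    Finset.sum_mul, Complex.star_def]
  refine Finset.sum_congr rfl fun a _ => ?_
  rw [perm4]
  exact Finset.sum_congr rfl fun b _ => Finset.sum_congr rfl fun c _ =>
    Finset.sum_congr rfl fun a' _ => Finset.sum_congr rfl fun c' _ => by ring

lemma Rmat_marg {d : ℕ} (φ : Fin d × Fin d → ℂ)
    (h : ∀ b b', ∑ a, φ (a, b) * (starRingEnd ℂ) (φ (a, b'))
        = if b = b' then (1 : ℂ) / d else 0) :
    (Rmat φ)ᴴ * Rmat φ = ((d : ℂ))⁻¹ • (1 : Matrix (Fin d) (Fin d) ℂ) := by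
  ext c c'
  simp only [Matrix.mul_apply, Matrix.conjTranspose_apply, Rmat, Matrix.of_apply,
    Matrix.smul_apply, Matrix.one_apply, smul_eq_mul]
  rw [show (∑ a, star (φ (a, c)) * φ (a, c'))
      = ∑ a, φ (a, c') * (starRingEnd ℂ) (φ (a, c)) from
    Finset.sum_congr rfl fun a _ => mul_comm _ _, h c' c]
  by_cases hc : c = c'
  · simp [hc, one_div]
  · simp only [hc, if_false]
    rw [if_neg (fun h' => hc (Eq.symm h')), mul_zero]

lemma entropy_bound {n : ℕ} {dR : ℝ} (hd : 0 < dR) (p : Fin n → ℝ) (h0 : ∀ i, 0 ≤ p i)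
    (hle : ∀ i, p i ≤ 1 / dR) (hsum : ∑ i, p i = 1) : Real.logb 2 dR ≤ H2 p := by
  have hterm : ∀ i, p i * Real.logb 2 dR ≤ -(p i * Real.logb 2 (p i)) := by
    intro i
    rcases (h0 i).eq_or_lt with h | h
    · simp [← h]
    · have h1 : dR ≤ (p i)⁻¹ := by
        rw [le_inv_comm₀ hd h]
        rw [one_div] at hle
        exact hle i
      have h2 : Real.logb 2 dR ≤ Real.logb 2 (p i)⁻¹ :=
        Real.logb_le_logb_of_le one_lt_two hd h1
      rw [Real.logb_inv] at h2
      nlinarith [h.le]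
  calc Real.logb 2 dR = (∑ i, p i) * Real.logb 2 dR := by rw [hsum, one_mul]
    _ = ∑ i, p i * Real.logb 2 dR := by rw [Finset.sum_mul]
    _ ≤ ∑ i, -(p i * Real.logb 2 (p i)) := Finset.sum_le_sum fun i _ => hterm i
    _ = H2 p := by rw [H2, ← Finset.sum_neg_distrib]

end CCAux

/-- direct-cause processes bound the common-cause indicator: if
`J = ρ_A ⊗ J_N` with `ρ_A` a state and `J_N` the Choi matrix of a channel from B to C
(`J_N` PSD, `Tr_C J_N = I_B`), then for all unitaries `U₁, U₂` and any maximally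
entangled orthonormal basis, `p_i ≤ 1/d` for all `i`, and hence `H(p) ≥ log₂ d`. -/
theorem direct_cause_bounds_common_cause_indicator {d : ℕ} (hd : 2 ≤ d)
    (Φ : Fin (d * d) → Fin d × Fin d → ℂ) (hΦ : IsMaxEntBasis Φ)
    (U₁ U₂ : Matrix (Fin d) (Fin d) ℂ)
    (hU₁ : U₁ ∈ Matrix.unitaryGroup (Fin d) ℂ)
    (hU₂ : U₂ ∈ Matrix.unitaryGroup (Fin d) ℂ)
    (ρ : Matrix (Fin d) (Fin d) ℂ) (hρ : ρ.PosSemidef) (hρ1 : ρ.trace = 1)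
    (JN : Matrix (Fin d × Fin d) (Fin d × Fin d) ℂ)
    (hJN : JN.PosSemidef) (hJNtr : trSnd JN = 1)
    (J : PMat d d d)
    (hJdef : J = Matrix.of fun p q => ρ p.1 q.1 * JN (p.2.1, p.2.2) (q.2.1, q.2.2)) :
    (∀ i, ccProb U₁ U₂ Φ J i ≤ 1 / d) ∧
    Real.logb 2 d ≤ H2 (ccProb U₁ U₂ Φ J) := by
  classical
  subst hJdef
  have hd0 : (0 : ℝ) < d := by
    have : 0 < d := by omega
    exact_mod_cast this
  have hdC : (d : ℂ) ≠ 0 := Nat.cast_ne_zero.mpr (by omega)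
  have h₁ : U₁ᴴ * U₁ = 1 := by
    have := Matrix.mem_unitaryGroup_iff'.mp hU₁
    simpa [Matrix.star_eq_conjTranspose] using this
  have h₂ : U₂ᴴ * U₂ = 1 := by
    have := Matrix.mem_unitaryGroup_iff'.mp hU₂
    simpa [Matrix.star_eq_conjTranspose] using this
  have h₂' : U₂ * U₂ᴴ = 1 := by
    have := Matrix.mem_unitaryGroup_iff.mp hU₂
    simpa [Matrix.star_eq_conjTranspose] using this
  have hMpsd := CCAux.psdM JN hJN
  have hJN1 : ∀ b : Fin d, ∑ c, JN (b, c) (b, c) = 1 := by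
    intro b
    have := congrArg (fun M => M b b) hJNtr
    simpa [trSnd, Matrix.one_apply] using this
  have hMtr : (Matrix.of fun c c' => ∑ b, JN (b, c) (b, c') :
      Matrix (Fin d) (Fin d) ℂ).trace = (d : ℂ) := by
    simp only [Matrix.trace, Matrix.diag, Matrix.of_apply]
    rw [Finset.sum_comm, Finset.sum_congr rfl fun b _ => hJN1 b]
    simp
  have hRψ : ∀ i, (CCAux.Rmat (kronVec U₁ U₂ (Φ i)))ᴴ * CCAux.Rmat (kronVec U₁ U₂ (Φ i))
      = ((d : ℂ))⁻¹ • 1 := fun i =>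
    CCAux.marg_kron h₁ h₂' (Φ i) _ (CCAux.Rmat_marg (Φ i) (hΦ.2.2.1 i))
  have hXpsd : ∀ i, (CCAux.Rmat (kronVec U₁ U₂ (Φ i)) *
      (Matrix.of fun c c' => ∑ b, JN (b, c) (b, c'))ᵀ *
      (CCAux.Rmat (kronVec U₁ U₂ (Φ i)))ᴴ).PosSemidef :=
    fun i => (hMpsd.transpose).mul_mul_conjTranspose_same _
  have hXtr : ∀ i, (CCAux.Rmat (kronVec U₁ U₂ (Φ i)) *
      (Matrix.of fun c c' => ∑ b, JN (b, c) (b, c'))ᵀ *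
      (CCAux.Rmat (kronVec U₁ U₂ (Φ i)))ᴴ).trace = 1 := by
    intro i
    rw [Matrix.trace_mul_comm, ← Matrix.mul_assoc, hRψ i, Matrix.smul_mul, Matrix.one_mul,
      Matrix.trace_smul, Matrix.trace_transpose, hMtr]
    simp [smul_eq_mul, inv_mul_cancel₀ hdC]
  have hprob : ∀ i,
      ((Matrix.of fun (p q : PIdx d d d) =>
          ρ p.1 q.1 * JN (p.2.1, p.2.2) (q.2.1, q.2.2)) *
        embAC (projMat (kronVec U₁ U₂ (Φ i)))).trace
      = (ρ * (CCAux.Rmat (kronVec U₁ U₂ (Φ i)) *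
          (Matrix.of fun c c' => ∑ b, JN (b, c) (b, c'))ᵀ *
          (CCAux.Rmat (kronVec U₁ U₂ (Φ i)))ᴴ)).trace := by
    intro i
    rw [CCAux.trace_emb, CCAux.trace_rhs]
    rfl
  have hSbound : ∀ i, 0 ≤ ((ρ * (CCAux.Rmat (kronVec U₁ U₂ (Φ i)) *
          (Matrix.of fun c c' => ∑ b, JN (b, c) (b, c'))ᵀ *
          (CCAux.Rmat (kronVec U₁ U₂ (Φ i)))ᴴ)).trace).re ∧
      ((ρ * (CCAux.Rmat (kronVec U₁ U₂ (Φ i)) *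
          (Matrix.of fun c c' => ∑ b, JN (b, c) (b, c'))ᵀ *
          (CCAux.Rmat (kronVec U₁ U₂ (Φ i)))ᴴ)).trace).re ≤ 1 := by
    intro i
    obtain ⟨l, r⟩ := CCAux.aux_trace_mul hρ (hXpsd i)
    refine ⟨l, r.trans ?_⟩
    rw [hρ1, hXtr i]
    norm_num
  have hcc : ∀ i, ccProb U₁ U₂ Φ
      (Matrix.of fun (p q : PIdx d d d) =>
          ρ p.1 q.1 * JN (p.2.1, p.2.2) (q.2.1, q.2.2)) i
      = (1 / (d : ℝ)) * (((Matrix.of fun (p q : PIdx d d d) =>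
          ρ p.1 q.1 * JN (p.2.1, p.2.2) (q.2.1, q.2.2)) *
        embAC (projMat (kronVec U₁ U₂ (Φ i)))).trace).re := by
    intro i
    simp only [ccProb, prob]
  have hple : ∀ i, ccProb U₁ U₂ Φ
      (Matrix.of fun (p q : PIdx d d d) =>
          ρ p.1 q.1 * JN (p.2.1, p.2.2) (q.2.1, q.2.2)) i ≤ 1 / d := by
    intro i
    rw [hcc i, hprob i]
    calc (1 / (d : ℝ)) * _ ≤ (1 / (d : ℝ)) * 1 :=
          mul_le_mul_of_nonneg_left (hSbound i).2 (by positivity)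
      _ = 1 / d := mul_one _
  have hp0 : ∀ i, 0 ≤ ccProb U₁ U₂ Φ
      (Matrix.of fun (p q : PIdx d d d) =>
          ρ p.1 q.1 * JN (p.2.1, p.2.2) (q.2.1, q.2.2)) i := by
    intro i
    rw [hcc i, hprob i]
    exact mul_nonneg (by positivity) (hSbound i).1
  -- sum to one
  have horth : ∀ i j, ∑ x, (starRingEnd ℂ) (kronVec U₁ U₂ (Φ i) x) * kronVec U₁ U₂ (Φ j) x
      = if i = j then (1 : ℂ) else 0 := fun i j => by
    rw [CCAux.psi_inner h₁ h₂ (Φ i) (Φ j)]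
    exact hΦ.1 i j
  have hcomp := CCAux.complete (fun i => kronVec U₁ U₂ (Φ i)) horth
  have hsumS : ∑ i, ((Matrix.of fun (p q : PIdx d d d) =>
          ρ p.1 q.1 * JN (p.2.1, p.2.2) (q.2.1, q.2.2)) *
        embAC (projMat (kronVec U₁ U₂ (Φ i)))).trace = (d : ℂ) := by
    rw [Finset.sum_congr rfl fun i _ => CCAux.trace_emb ρ JN (projMat (kronVec U₁ U₂ (Φ i)))]
    rw [CCAux.sum_in5]
    have hin : ∀ a b c a' c' : Fin d,
        (∑ i, ρ a a' * JN (b, c) (b, c') * projMat (kronVec U₁ U₂ (Φ i)) (a', c') (a, c))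
          = ρ a a' * JN (b, c) (b, c') * (if (a', c') = ((a : Fin d), (c : Fin d)) then (1:ℂ) else 0) := by
      intro a b c a' c'
      rw [← Finset.mul_sum]
      congr 1
      exact hcomp (a', c') (a, c)
    simp only [hin, Prod.mk.injEq, ite_and, mul_ite, mul_one, mul_zero,
      Finset.sum_ite_irrel, Finset.sum_const_zero, Finset.sum_ite_eq',
      Finset.mem_univ, if_true]
    -- now: ∑ a, ∑ b, ∑ c, ρ a a * JN (b,c) (b,c) = d
    simp only [← Finset.mul_sum]
    rw [← Finset.sum_mul, show (∑ a, ρ a a) = ρ.trace from rfl, hρ1, one_mul]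
    rw [Finset.sum_congr rfl fun b _ => hJN1 b]
    simp
  have hsum : ∑ i, ccProb U₁ U₂ Φ
      (Matrix.of fun (p q : PIdx d d d) =>
          ρ p.1 q.1 * JN (p.2.1, p.2.2) (q.2.1, q.2.2)) i = 1 := by
    rw [Finset.sum_congr rfl fun i _ => hcc i, ← Finset.mul_sum, ← Complex.re_sum, hsumS]
    simp only [Complex.natCast_re]
    field_simp
  exact ⟨hple, CCAux.entropy_bound hd0 _ hp0 hple hsum⟩
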